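/- arXiv:1404.1016 — 4 statements merged into one kernel-verified Lean document; each statement's English description precedes it below -/
import Mathlib

section
/- Let F be the attractor of an IFS of contracting similarities {S_i}_{i∈I} on ℝ^d with ratios c_i ∈ (0,1), let s = dim_H F be the Hausdorff dimension of F, and suppose H^s(F) > 0. Let c_min = min_{i∈I} c_i and let |F| denote the diameter of F (assumed positive). Then for every x ∈ F and every 0 < r < min{1, |F|}, H^s(B(x,r) ∩ F) ≥ (c_min^s · H^s(F) / |F|^s) · r^s. -/
open Set Metric Filter Function MeasureTheory

/-- The Assouad dimension of a subset of a metric space: the infimum of all `s ≥ 0`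
for which there is a constant `K > 0` such that for all `0 < ρ < r ≤ 1`, every ball
of radius `r` centred in the set can be covered by at most `K (r/ρ)^s` open balls of
radius `ρ`. -/
noncomputable def assouadDim {X : Type*} [MetricSpace X] (A : Set X) : ℝ :=
  sInf {s : ℝ | 0 ≤ s ∧ ∃ K : ℝ, 0 < K ∧ ∀ r ρ : ℝ, 0 < ρ → ρ < r → r ≤ 1 →
    ∀ x ∈ A, ∃ t : Finset X, (A ∩ Metric.ball x r ⊆ ⋃ y ∈ t, Metric.ball y ρ) ∧
      (t.card : ℝ) ≤ K * (r / ρ) ^ s}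

/-- The composition `S_{i₁} ∘ ⋯ ∘ S_{i_k}` associated to a finite word. -/
def wordMap {ι X : Type*} (S : ι → X → X) : List ι → X → X
  | [] => id
  | i :: w => S i ∘ wordMap S w

/-- The weak separation property: the identity is not in the closure (for the topology of
pointwise convergence) of the set of maps `S_α⁻¹ ∘ S_β` for distinct nonempty words
`α ≠ β`, with the identity itself removed. -/
def SatisfiesWSP {ι X : Type*} [Nonempty X] [TopologicalSpace X] (S : ι → X → X) : Prop :=
  id ∉ closure ({g : X → X | ∃ w₁ w₂ : List ι, w₁ ≠ [] ∧ w₂ ≠ [] ∧ w₁ ≠ w₂ ∧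
      g = Function.invFun (wordMap S w₁) ∘ wordMap S w₂} \ {id})


lemma sim_measure_lower {d : ℕ} (f : EuclideanSpace ℝ (Fin d) → EuclideanSpace ℝ (Fin d))
    (c : ℝ) (hc : 0 < c) (hf : ∀ x y, dist (f x) (f y) = c * dist x y)
    (s : ℝ) (hs : 0 ≤ s) (E : Set (EuclideanSpace ℝ (Fin d))) :
    ENNReal.ofReal c ^ s * μH[s] E ≤ μH[s] (f '' E) := by
  have hinj : Function.Injective f := by
    intro a b hab
    have h := hf a b
    rw [hab, dist_self] at h
    have h0 : dist a b = 0 := by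
      rcases mul_eq_zero.mp h.symm with h | h
      · exact absurd h hc.ne'
      · exact h
    exact dist_eq_zero.mp h0
  have hgf : ∀ x, Function.invFun f (f x) = x := Function.leftInverse_invFun hinj
  have hlip : LipschitzOnWith (c⁻¹).toNNReal (Function.invFun f) (f '' E) := by
    apply LipschitzOnWith.of_dist_le_mul
    rintro a ⟨u, hu, rfl⟩ b ⟨v, hv, rfl⟩
    rw [hgf, hgf, Real.coe_toNNReal _ (by positivity), hf]
    rw [← mul_assoc, inv_mul_cancel₀ hc.ne', one_mul]
  have key : μH[s] E ≤ (ENNReal.ofReal c⁻¹) ^ s * μH[s] (f '' E) := by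
    have h := hlip.hausdorffMeasure_image_le hs
    have himg : Function.invFun f '' (f '' E) = E := by
      rw [← Set.image_comp]
      have : Set.EqOn (Function.invFun f ∘ f) id E := fun a _ => hgf a
      rw [this.image_eq, Set.image_id]
    rw [himg] at h
    exact h
  calc ENNReal.ofReal c ^ s * μH[s] E
      ≤ ENNReal.ofReal c ^ s * ((ENNReal.ofReal c⁻¹) ^ s * μH[s] (f '' E)) :=
        mul_le_mul_right key _
    _ = (ENNReal.ofReal c ^ s * (ENNReal.ofReal c⁻¹) ^ s) * μH[s] (f '' E) := by ring
    _ = μH[s] (f '' E) := by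
        rw [← ENNReal.mul_rpow_of_nonneg _ _ hs, ← ENNReal.ofReal_mul hc.le,
          mul_inv_cancel₀ hc.ne', ENNReal.ofReal_one, ENNReal.one_rpow, one_mul]


/-- **Lower Ahlfors regularity bound for self-similar sets.**  Let `F` be the attractor
of an IFS of contracting similarities on `ℝ^d` with ratios `c i ∈ (0,1)`, let
`s = dim_H F`, and suppose `H^s(F) > 0`.  With `cmin` the least ratio and `|F| = diam F`
(assumed positive), for every `x ∈ F` and `0 < r < min 1 (diam F)` we have
`H^s(B(x,r) ∩ F) ≥ (cmin^s · H^s(F) / |F|^s) · r^s`. -/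
theorem hausdorff_measure_ball_lower_bound {d : ℕ} {ι : Type} [Fintype ι] [Nonempty ι]
    (S : ι → EuclideanSpace ℝ (Fin d) → EuclideanSpace ℝ (Fin d)) (c : ι → ℝ)
    (hc : ∀ i, c i ∈ Set.Ioo (0 : ℝ) 1)
    (hsim : ∀ i x y, dist (S i x) (S i y) = c i * dist x y)
    (F : Set (EuclideanSpace ℝ (Fin d))) (hFcomp : IsCompact F) (hFne : F.Nonempty)
    (hFattr : F = ⋃ i, S i '' F)
    (s : ℝ) (hs : s = (dimH F).toReal)
    (hpos : 0 < μH[s] F)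
    (cmin : ℝ) (hcmin : IsLeast (Set.range c) cmin)
    (hdiam : 0 < Metric.diam F) :
    ∀ x ∈ F, ∀ r : ℝ, 0 < r → r < min 1 (Metric.diam F) →
      ENNReal.ofReal (cmin ^ s / Metric.diam F ^ s * r ^ s) * μH[s] F ≤
        μH[s] (Metric.ball x r ∩ F) := by
  -- basic facts
  have hsnn : 0 ≤ s := hs ▸ ENNReal.toReal_nonneg
  obtain ⟨i₀, hi₀⟩ := hcmin.1
  have hcminpos : 0 < cmin := hi₀ ▸ (hc i₀).1
  have hcmin_le : ∀ i, cmin ≤ c i := fun i => hcmin.2 ⟨i, rfl⟩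
  -- maximal ratio
  obtain ⟨j, -, hj⟩ := Finset.exists_max_image (Finset.univ : Finset ι) c ⟨Classical.arbitrary ι, Finset.mem_univ _⟩
  set cmax := c j with hcmaxdef
  have hcmax0 : 0 < cmax := (hc j).1
  have hcmax1 : cmax < 1 := (hc j).2
  have hcmax_ge : ∀ i, c i ≤ cmax := fun i => hj i (Finset.mem_univ i)
  have hSsub : ∀ i, S i '' F ⊆ F := by
    intro i
    conv_rhs => rw [hFattr]
    exact Set.subset_iUnion (fun i => S i '' F) i
  have hFbdd : Bornology.IsBounded F := hFcomp.isBounded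
  -- key induction
  have key : ∀ n : ℕ, ∀ x ∈ F, ∀ r : ℝ, 0 < r → cmax ^ n * Metric.diam F < r →
      ∃ (ρ : ℝ) (E : Set (EuclideanSpace ℝ (Fin d))), 0 < ρ ∧ x ∈ E ∧ E ⊆ F ∧
        Metric.diam E ≤ ρ * Metric.diam F ∧
        ENNReal.ofReal ρ ^ s * μH[s] F ≤ μH[s] E ∧
        ρ * Metric.diam F < r ∧
        (r ≤ Metric.diam F → cmin * r ≤ ρ * Metric.diam F) ∧
        (Metric.diam F < r → 1 ≤ ρ) := by
    have base : ∀ x ∈ F, ∀ r : ℝ, Metric.diam F < r →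
        ∃ (ρ : ℝ) (E : Set (EuclideanSpace ℝ (Fin d))), 0 < ρ ∧ x ∈ E ∧ E ⊆ F ∧
          Metric.diam E ≤ ρ * Metric.diam F ∧
          ENNReal.ofReal ρ ^ s * μH[s] F ≤ μH[s] E ∧
          ρ * Metric.diam F < r ∧
          (r ≤ Metric.diam F → cmin * r ≤ ρ * Metric.diam F) ∧
          (Metric.diam F < r → 1 ≤ ρ) := by
      intro x hx r hr
      refine ⟨1, F, one_pos, hx, le_rfl, by rw [one_mul], ?_, by rwa [one_mul], ?_, fun _ => le_rfl⟩
      · rw [ENNReal.ofReal_one, ENNReal.one_rpow, one_mul]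
      · intro h; linarith
    intro n
    induction n with
    | zero =>
      intro x hx r _ hlt
      rw [pow_zero, one_mul] at hlt
      exact base x hx r hlt
    | succ n ih =>
      intro x hx r hr hlt
      rcases lt_or_ge (Metric.diam F) r with hcase | hcase
      · exact base x hx r hcase
      · -- r ≤ diam F : apply one map
        have hxU : x ∈ ⋃ i, S i '' F := hFattr ▸ hx
        obtain ⟨i, y, hyF, hxy⟩ := by
          simpa only [Set.mem_iUnion, Set.mem_image] using hxU
        have hci : 0 < c i := (hc i).1
        have hr' : 0 < r / c i := div_pos hr hci
        have hlt' : cmax ^ n * Metric.diam F < r / c i := by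
          rw [lt_div_iff₀ hci]
          have h1 : cmax ^ n * Metric.diam F * c i ≤ cmax ^ n * Metric.diam F * cmax := by
            have : (0:ℝ) ≤ cmax ^ n * Metric.diam F := by positivity
            exact mul_le_mul_of_nonneg_left (hcmax_ge i) this
          calc cmax ^ n * Metric.diam F * c i ≤ cmax ^ n * Metric.diam F * cmax := h1
            _ = cmax ^ (n+1) * Metric.diam F := by ring
            _ < r := hlt
        obtain ⟨ρ', E', hρ'0, hyE', hE'F, hdiamE', hmeasE', hρ'lt, hρ'min, hρ'one⟩ :=
          ih y hyF (r / c i) hr' hlt'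
        refine ⟨c i * ρ', S i '' E', by positivity, ⟨y, hyE', hxy⟩,
          (Set.image_mono hE'F).trans (hSsub i), ?_, ?_, ?_, ?_, ?_⟩
        · -- diameter bound
          apply Metric.diam_le_of_forall_dist_le (by positivity)
          rintro a ⟨u, hu, rfl⟩ b ⟨v, hv, rfl⟩
          rw [hsim i]
          calc c i * dist u v ≤ c i * Metric.diam E' := by
                exact mul_le_mul_of_nonneg_left
                  (Metric.dist_le_diam_of_mem (hFbdd.subset hE'F) hu hv) hci.le
            _ ≤ c i * (ρ' * Metric.diam F) := mul_le_mul_of_nonneg_left hdiamE' hci.le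
            _ = c i * ρ' * Metric.diam F := by ring
        · -- measure bound
          have hsim' := sim_measure_lower (S i) (c i) hci (hsim i) s hsnn E'
          calc ENNReal.ofReal (c i * ρ') ^ s * μH[s] F
              = ENNReal.ofReal (c i) ^ s * (ENNReal.ofReal ρ' ^ s * μH[s] F) := by
                rw [ENNReal.ofReal_mul hci.le, ENNReal.mul_rpow_of_nonneg _ _ hsnn, mul_assoc]
            _ ≤ ENNReal.ofReal (c i) ^ s * μH[s] E' := mul_le_mul_right hmeasE' _
            _ ≤ μH[s] (S i '' E') := hsim'
        · -- ρ * diam F < r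
          have := (lt_div_iff₀ hci).mp hρ'lt
          calc c i * ρ' * Metric.diam F = ρ' * Metric.diam F * c i := by ring
            _ < r := this
        · -- minimality bound
          intro _
          rcases le_or_gt (r / c i) (Metric.diam F) with h2 | h2
          · have := hρ'min h2
            have h3 : cmin * (r / c i) * c i ≤ ρ' * Metric.diam F * c i :=
              mul_le_mul_of_nonneg_right this hci.le
            have h4 : cmin * (r / c i) * c i = cmin * r := by
              field_simp
            linarith [h3, h4 ▸ h3]
          · have h1 : (1:ℝ) ≤ ρ' := hρ'one h2
            have h5 : cmin * r ≤ cmin * Metric.diam F :=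
              mul_le_mul_of_nonneg_left hcase hcminpos.le
            have h6 : cmin * Metric.diam F ≤ c i * Metric.diam F :=
              mul_le_mul_of_nonneg_right (hcmin_le i) hdiam.le
            have h7 : c i * Metric.diam F ≤ c i * ρ' * Metric.diam F := by
              calc c i * Metric.diam F = c i * Metric.diam F * 1 := by ring
                _ ≤ c i * Metric.diam F * ρ' :=
                    mul_le_mul_of_nonneg_left h1 (mul_nonneg hci.le hdiam.le)
                _ = c i * ρ' * Metric.diam F := by ring
            linarith
        · intro h; linarith
  -- main argument
  intro x hx r hr hrlt
  have hr1 : r < 1 := lt_of_lt_of_le hrlt (min_le_left _ _)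
  have hrD : r < Metric.diam F := lt_of_lt_of_le hrlt (min_le_right _ _)
  -- find n with cmax ^ n * diam F < r
  have htend : Tendsto (fun n : ℕ => cmax ^ n * Metric.diam F) atTop (nhds 0) := by
    simpa using (tendsto_pow_atTop_nhds_zero_of_lt_one hcmax0.le hcmax1).mul_const (Metric.diam F)
  obtain ⟨n, hn⟩ := ((htend.eventually (eventually_lt_nhds hr)).exists)
  obtain ⟨ρ, E, hρ0, hxE, hEF, hdiamE, hmeasE, hρlt, hρmin, -⟩ := key n x hx r hr hn
  have hEball : E ⊆ Metric.ball x r ∩ F := by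
    intro y hy
    refine ⟨?_, hEF hy⟩
    rw [Metric.mem_ball]
    calc dist y x ≤ Metric.diam E := Metric.dist_le_diam_of_mem (hFbdd.subset hEF) hy hxE
      _ ≤ ρ * Metric.diam F := hdiamE
      _ < r := hρlt
  have hρge : cmin * r / Metric.diam F ≤ ρ := by
    rw [div_le_iff₀ hdiam]
    exact hρmin hrD.le
  have hcoef : ENNReal.ofReal (cmin ^ s / Metric.diam F ^ s * r ^ s) ≤ ENNReal.ofReal ρ ^ s := by
    rw [ENNReal.ofReal_rpow_of_pos hρ0]
    apply ENNReal.ofReal_le_ofReal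
    have heq : cmin ^ s / Metric.diam F ^ s * r ^ s = (cmin * r / Metric.diam F) ^ s := by
      rw [Real.div_rpow (by positivity) hdiam.le, Real.mul_rpow hcminpos.le hr.le]
      ring
    rw [heq]
    exact Real.rpow_le_rpow (by positivity) hρge hsnn
  calc ENNReal.ofReal (cmin ^ s / Metric.diam F ^ s * r ^ s) * μH[s] F
      ≤ ENNReal.ofReal ρ ^ s * μH[s] F := mul_le_mul_left hcoef _
    _ ≤ μH[s] E := hmeasE
    _ ≤ μH[s] (Metric.ball x r ∩ F) := measure_mono hEball
end

section
/- Let {S_i}_{i∈I} be an IFS of contracting similarities on ℝ with attractor F ⊆ [0,1]. Suppose there exist finite words α_k, β_k ∈ I* such that ‖S_{α_k}^{-1}∘S_{β_k} − I‖_∞ → 0 as k → ∞, where ‖·‖_∞ denotes the supremum norm over [0,1]. Then there exist finite words α'_k, β'_k ∈ I* such that ‖S_{α'_k}^{-1}∘S_{β'_k} − I‖_∞ → 0 as k → ∞ and such that each S_{α'_k} is orientation-preserving, i.e. has positive derivative S'_{α'_k} = c_{α'_k} > 0. -/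
open Set Metric Filter Function

lemma wordMap_append {ι X : Type*} (S : ι → X → X) (u v : List ι) :
    wordMap S (u ++ v) = wordMap S u ∘ wordMap S v := by
  induction u with
  | nil => rfl
  | cons i u ih => simp [wordMap, ih, Function.comp_assoc]

lemma sim_affine (f : ℝ → ℝ) (c : ℝ) (hc : 0 < c)
    (h : ∀ x y, dist (f x) (f y) = c * dist x y) :
    ∃ e d : ℝ, e ≠ 0 ∧ ∀ x, f x = e * x + d := by
  have key : ∀ x y : ℝ, (f x - f y) ^ 2 = (c * (x - y)) ^ 2 := by
    intro x y
    have := h x y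
    rw [Real.dist_eq, Real.dist_eq] at this
    have : |f x - f y| = |c * (x - y)| := by
      rw [abs_mul, abs_of_pos hc]; exact this
    calc (f x - f y) ^ 2 = |f x - f y| ^ 2 := (sq_abs _).symm
      _ = |c * (x - y)| ^ 2 := by rw [this]
      _ = (c * (x - y)) ^ 2 := sq_abs _
  have h1 : (f 1 - f 0) ^ 2 = c ^ 2 := by have := key 1 0; ring_nf at this ⊢; linarith
  have hprod : (f 1 - f 0 - c) * (f 1 - f 0 + c) = 0 := by nlinarith
  have hcase : f 1 - f 0 = c ∨ f 1 - f 0 = -c := by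
    rcases mul_eq_zero.mp hprod with h' | h'
    · exact Or.inl (by linarith)
    · exact Or.inr (by linarith)
  rcases hcase with hca | hca
  · refine ⟨c, f 0, ne_of_gt hc, fun x => ?_⟩
    have e1 := key x 0
    have e2 := key x 1
    have h1' : f 1 = f 0 + c := by linarith
    rw [h1'] at e2
    have h3 : 2 * c * f x = 2 * c * (c * x + f 0) := by linear_combination e1 - e2
    exact mul_left_cancel₀ (by positivity) h3
  · refine ⟨-c, f 0, by linarith, fun x => ?_⟩
    have e1 := key x 0
    have e2 := key x 1
    have h1' : f 1 = f 0 - c := by linarith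
    rw [h1'] at e2
    have h3 : 2 * c * f x = 2 * c * (-c * x + f 0) := by linear_combination e2 - e1
    exact mul_left_cancel₀ (by positivity) h3

/-- **Removing reflections.**  Let `{S i}` be an IFS of contracting similarities on `ℝ`
with attractor `F ⊆ [0,1]`.  If there are nonempty words `α k, β k` with
`‖S_{α k}⁻¹ ∘ S_{β k} - I‖_∞ → 0` (supremum over `[0,1]`), then there are nonempty
words `α' k, β' k` with `‖S_{α' k}⁻¹ ∘ S_{β' k} - I‖_∞ → 0` such that every
`S_{α' k}` is orientation-preserving (strictly increasing, i.e. positive derivative). -/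
theorem remove_reflections {ι : Type} [Fintype ι] [Nonempty ι]
    (S : ι → ℝ → ℝ) (c : ι → ℝ)
    (hc : ∀ i, c i ∈ Set.Ioo (0 : ℝ) 1)
    (hsim : ∀ i x y, dist (S i x) (S i y) = c i * dist x y)
    (F : Set ℝ) (hFcomp : IsCompact F) (hFne : F.Nonempty)
    (hFattr : F = ⋃ i, S i '' F) (hFsub : F ⊆ Set.Icc (0 : ℝ) 1)
    (A B : ℕ → List ι) (hA : ∀ k, A k ≠ []) (hB : ∀ k, B k ≠ [])
    (hconv : Tendsto (fun k => ⨆ x : Set.Icc (0 : ℝ) 1,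
        |Function.invFun (wordMap S (A k)) (wordMap S (B k) (x : ℝ)) - (x : ℝ)|)
      atTop (nhds 0)) :
    ∃ A' B' : ℕ → List ι, (∀ k, A' k ≠ []) ∧ (∀ k, B' k ≠ []) ∧
      (∀ k, StrictMono (wordMap S (A' k))) ∧
      Tendsto (fun k => ⨆ x : Set.Icc (0 : ℝ) 1,
          |Function.invFun (wordMap S (A' k)) (wordMap S (B' k) (x : ℝ)) - (x : ℝ)|)
        atTop (nhds 0) := by
  classical
  -- every wordMap is affine with nonzero slope
  have haff : ∀ w : List ι, ∃ e d : ℝ, e ≠ 0 ∧ ∀ x, wordMap S w x = e * x + d := by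
    intro w
    induction w with
    | nil => exact ⟨1, 0, one_ne_zero, fun x => by simp [wordMap]⟩
    | cons i w ih =>
      obtain ⟨e, d, he, hfd⟩ := ih
      obtain ⟨e', d', he', hfd'⟩ := sim_affine (S i) (c i) (hc i).1 (hsim i)
      exact ⟨e' * e, e' * d + d', mul_ne_zero he' he,
        fun x => by simp [wordMap, hfd, hfd']; ring⟩
  have hbij : ∀ w : List ι, Function.Bijective (wordMap S w) := by
    intro w
    obtain ⟨e, d, he, hfd⟩ := haff w
    constructor
    · intro x y hxy
      rw [hfd, hfd] at hxy
      have : e * x = e * y := by linarith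
      exact mul_left_cancel₀ he this
    · intro y
      exact ⟨(y - d) / e, by rw [hfd]; field_simp; ring⟩
  set A' : ℕ → List ι := fun k =>
    if wordMap S (A k) 0 < wordMap S (A k) 1 then A k else A k ++ A k with hA'
  set B' : ℕ → List ι := fun k =>
    if wordMap S (A k) 0 < wordMap S (A k) 1 then B k else A k ++ B k with hB'
  have hkey : ∀ k (x : ℝ),
      Function.invFun (wordMap S (A' k)) (wordMap S (B' k) x) =
      Function.invFun (wordMap S (A k)) (wordMap S (B k) x) := by
    intro k x
    by_cases hk : wordMap S (A k) 0 < wordMap S (A k) 1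
    · simp only [hA', hB', if_pos hk]
    · simp only [hA', hB', if_neg hk, wordMap_append]
      set f := wordMap S (A k)
      set g := wordMap S (B k)
      set y := Function.invFun f (g x) with hy
      have hfy : f y = g x := Function.invFun_eq ((hbij (A k)).2 (g x))
      have h2 : (f ∘ g) x = (f ∘ f) y := by simp only [Function.comp]; rw [hfy]
      rw [h2, Function.leftInverse_invFun ((hbij (A k)).1.comp (hbij (A k)).1)]
  refine ⟨A', B', ?_, ?_, ?_, ?_⟩
  · intro k
    simp only [hA']
    split <;> simp [hA k]
  · intro k
    simp only [hB']
    split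
    · exact hB k
    · simp [hA k]
  · intro k
    obtain ⟨e, d, he, hfd⟩ := haff (A k)
    by_cases hk : wordMap S (A k) 0 < wordMap S (A k) 1
    · simp only [hA', if_pos hk]
      have hepos : 0 < e := by
        rw [hfd, hfd] at hk; nlinarith
      intro x y hxy
      rw [hfd, hfd]; nlinarith
    · simp only [hA', if_neg hk, wordMap_append]
      intro x y hxy
      simp only [Function.comp, hfd]
      nlinarith [sq_nonneg e, mul_self_pos.mpr he]
  · have : (fun k => ⨆ x : Set.Icc (0 : ℝ) 1,
        |Function.invFun (wordMap S (A' k)) (wordMap S (B' k) (x : ℝ)) - (x : ℝ)|) =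
        (fun k => ⨆ x : Set.Icc (0 : ℝ) 1,
        |Function.invFun (wordMap S (A k)) (wordMap S (B k) (x : ℝ)) - (x : ℝ)|) := by
      funext k
      exact iSup_congr fun x => by rw [hkey k x]
    rw [this]
    exact hconv
end

section
/- Let t = 4·∑_{k=0}^∞ 5^{−2^k} and consider the IFS on [0,1] consisting of the three maps S'_1(x) = x/5, S'_2(x) = x/5 + t/5, S'_3(x) = x/5 + 4/5. This IFS does not satisfy the weak separation property: there exist finite words α_k, β_k ∈ I* with S_{α_k}^{-1}∘S_{β_k} ≠ I for all k and ‖S_{α_k}^{-1}∘S_{β_k} − I‖_∞ → 0 as k → ∞. -/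
open Set Metric Filter Function MeasureTheory

noncomputable def Dof (t : ℝ) : List (Fin 3) → ℝ
  | [] => 0
  | i :: w => Dof t w / 5 + ![(0:ℝ), t/5, 4/5] i

lemma wordMap_eq {t : ℝ} {S : Fin 3 → ℝ → ℝ}
    (hS : S = ![fun x => x / 5, fun x => x / 5 + t / 5, fun x => x / 5 + 4 / 5])
    (w : List (Fin 3)) (x : ℝ) :
    wordMap S w x = x / 5 ^ w.length + Dof t w := by
  have hSi : ∀ i x, S i x = x / 5 + ![(0:ℝ), t/5, 4/5] i := by
    subst hS; intro i x; fin_cases i <;> simp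
  induction w with
  | nil => simp [wordMap, Dof]
  | cons i w ih =>
    simp only [wordMap, Function.comp_apply, ih, hSi, Dof, List.length_cons]
    rw [pow_succ]
    ring

lemma Dof_append (t : ℝ) (w₁ w₂ : List (Fin 3)) :
    Dof t (w₁ ++ w₂) = Dof t w₂ / 5 ^ w₁.length + Dof t w₁ := by
  induction w₁ with
  | nil => simp [Dof]
  | cons i w ih =>
    have h : (i :: w) ++ w₂ = i :: (w ++ w₂) := rfl
    rw [h]
    simp only [Dof, ih, List.length_cons]
    rw [pow_succ]
    ring

lemma Dof_replicate (t : ℝ) (m : ℕ) : Dof t (List.replicate m 0) = 0 := by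
  induction m with
  | zero => simp [Dof]
  | succ m ih => simp [List.replicate_succ, Dof, ih]

def Aw : ℕ → List (Fin 3)
  | 0 => [0, 2]
  | k+1 => Aw k ++ (List.replicate (2^k - 1) 0 ++ [2])

def Bw (k : ℕ) : List (Fin 3) := 1 :: List.replicate (2^k) 0

lemma Aw_length (k : ℕ) : (Aw k).length = 2 ^ k + 1 := by
  induction k with
  | zero => simp [Aw]
  | succ k ih =>
    have h1 : (1:ℕ) ≤ 2 ^ k := Nat.one_le_two_pow
    simp [Aw, ih, List.length_append, List.length_replicate]
    omega

lemma Bw_length (k : ℕ) : (Bw k).length = 2 ^ k + 1 := by simp [Bw]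

lemma Dof_Bw (t : ℝ) (k : ℕ) : Dof t (Bw k) = t / 5 := by
  simp [Bw, Dof, Dof_replicate]

lemma Dof_Aw (t : ℝ) (k : ℕ) :
    Dof t (Aw k) = (4/5) * ∑ i ∈ Finset.range (k+1), ((5:ℝ)⁻¹) ^ (2 ^ i) := by
  induction k with
  | zero => norm_num [Aw, Dof, Matrix.cons_val_two, Matrix.vecHead, Matrix.vecTail]
  | succ k ih =>
    have h1 : (1:ℕ) ≤ 2 ^ k := Nat.one_le_two_pow
    rw [Aw, Dof_append, Dof_append, Dof_replicate, Aw_length, ih,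
      Finset.sum_range_succ (n := k+1), List.length_replicate]
    have h2 : Dof t [2] = 4/5 := by norm_num [Dof, Matrix.cons_val_two, Matrix.vecHead, Matrix.vecTail]
    have h3 : (5:ℝ) ^ (2^k - 1) * 5 ^ (2^k + 1) = 5 ^ (2^(k+1)) := by
      rw [← pow_add]; congr 1; omega
    have key : ((4:ℝ)/5 / 5^(2^k-1) + 0) / 5^(2^k+1) = (4/5) * ((5:ℝ)⁻¹)^(2^(k+1)) := by
      rw [add_zero, div_div, h3, inv_pow, div_eq_mul_inv]
    rw [h2, key]
    ring

lemma wordMap_injective {t : ℝ} {S : Fin 3 → ℝ → ℝ}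
    (hS : S = ![fun x => x / 5, fun x => x / 5 + t / 5, fun x => x / 5 + 4 / 5])
    (w : List (Fin 3)) : Function.Injective (wordMap S w) := by
  intro a b h
  rw [wordMap_eq hS, wordMap_eq hS] at h
  have h5 : (5:ℝ) ^ w.length ≠ 0 := by positivity
  field_simp at h
  exact add_right_cancel h

lemma invFun_wordMap {t : ℝ} {S : Fin 3 → ℝ → ℝ}
    (hS : S = ![fun x => x / 5, fun x => x / 5 + t / 5, fun x => x / 5 + 4 / 5])
    (w : List (Fin 3)) :
    Function.invFun (wordMap S w) = fun y => 5 ^ w.length * (y - Dof t w) := by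
  apply Function.invFun_eq_of_injective_of_rightInverse (wordMap_injective hS w)
  intro y
  rw [wordMap_eq hS]
  have h5 : (5:ℝ) ^ w.length ≠ 0 := by positivity
  field_simp
  ring

noncomputable def eps (k : ℕ) : ℝ := 4 * 5 ^ (2^k) * ∑' i : ℕ, ((5:ℝ)⁻¹) ^ (2 ^ (i + (k+1)))

lemma summable_f : Summable (fun i : ℕ => ((5:ℝ)⁻¹) ^ (2 ^ i)) := by
  apply Summable.of_nonneg_of_le (fun i => by positivity)
    (fun i => pow_le_pow_of_le_one (by norm_num) (by norm_num) (Nat.le_of_lt (Nat.lt_two_pow_self (n := i))))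
  exact summable_geometric_of_lt_one (by norm_num) (by norm_num)

lemma summable_f' (k : ℕ) : Summable (fun i : ℕ => ((5:ℝ)⁻¹) ^ (2 ^ (i + (k+1)))) :=
  summable_f.comp_injective (fun a b h => by omega)

lemma eps_pos (k : ℕ) : 0 < eps k := by
  have h := Summable.le_tsum (summable_f' k) 0 (fun j _ => by positivity)
  have : (0:ℝ) < ((5:ℝ)⁻¹) ^ (2 ^ (0 + (k+1))) := by positivity
  have h2 : (0:ℝ) < ∑' i : ℕ, ((5:ℝ)⁻¹) ^ (2 ^ (i + (k+1))) := lt_of_lt_of_le this h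
  unfold eps
  positivity

lemma eps_le (k : ℕ) : eps k ≤ 5 * ((5:ℝ)⁻¹) ^ (2^k) := by
  have hterm : ∀ i : ℕ, ((5:ℝ)⁻¹) ^ (2 ^ (i + (k+1)))
      ≤ ((5:ℝ)⁻¹) ^ (2^k) * ((5:ℝ)⁻¹) ^ (2^k) * ((5:ℝ)⁻¹) ^ i := by
    intro i
    rw [← pow_add, ← pow_add]
    apply pow_le_pow_of_le_one (by norm_num) (by norm_num)
    have h1 : i + 1 ≤ 2 ^ i := Nat.lt_two_pow_self (n := i)
    calc 2^k + 2^k + i ≤ 2^(k+1) * (i+1) := by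
          have e : 2^(k+1) = 2^k*2 := pow_succ 2 k
          have p : 1 ≤ 2^k := Nat.one_le_two_pow
          nlinarith
      _ ≤ 2^(k+1) * 2^i := Nat.mul_le_mul_left _ h1
      _ = 2^(i + (k+1)) := by rw [← pow_add]; ring_nf
  have hsum : ∑' i : ℕ, ((5:ℝ)⁻¹) ^ (2 ^ (i + (k+1)))
      ≤ ∑' i : ℕ, ((5:ℝ)⁻¹) ^ (2^k) * ((5:ℝ)⁻¹) ^ (2^k) * ((5:ℝ)⁻¹) ^ i := by
    apply Summable.tsum_le_tsum hterm (summable_f' k)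
    exact (summable_geometric_of_lt_one (by norm_num) (by norm_num)).mul_left _
  rw [tsum_mul_left, tsum_geometric_of_lt_one (by norm_num) (by norm_num)] at hsum
  unfold eps
  have h5 : (0:ℝ) < 5 ^ (2^k) := by positivity
  calc 4 * 5 ^ (2^k) * ∑' i : ℕ, ((5:ℝ)⁻¹) ^ (2 ^ (i + (k+1)))
      ≤ 4 * 5 ^ (2^k) * (((5:ℝ)⁻¹) ^ (2^k) * ((5:ℝ)⁻¹) ^ (2^k) * (1 - 5⁻¹)⁻¹) := by
        apply mul_le_mul_of_nonneg_left hsum (by positivity)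
    _ = 5 * ((5:ℝ)⁻¹) ^ (2^k) := by
        rw [inv_pow]
        field_simp
        ring

lemma key_formula {t : ℝ} (ht : t = 4 * ∑' k : ℕ, ((5 : ℝ)⁻¹) ^ (2 ^ k))
    {S : Fin 3 → ℝ → ℝ}
    (hS : S = ![fun x => x / 5, fun x => x / 5 + t / 5, fun x => x / 5 + 4 / 5])
    (k : ℕ) (x : ℝ) :
    Function.invFun (wordMap S (Aw k)) (wordMap S (Bw k) x) = x + eps k := by
  rw [invFun_wordMap hS, wordMap_eq hS, Aw_length, Bw_length, Dof_Aw, Dof_Bw]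
  have htail := Summable.sum_add_tsum_nat_add (f := fun i : ℕ => ((5:ℝ)⁻¹) ^ (2 ^ i)) (k+1) summable_f
  have h5 : (5:ℝ) ^ (2^k + 1) ≠ 0 := by positivity
  have hx : x / 5 ^ (2^k+1) + t / 5 - 4 / 5 * ∑ i ∈ Finset.range (k + 1), ((5:ℝ)⁻¹) ^ 2 ^ i
      = x / 5 ^ (2^k+1) + (4/5) * ∑' i : ℕ, ((5:ℝ)⁻¹) ^ (2 ^ (i + (k+1))) := by
    rw [ht, ← htail]; ring
  beta_reduce
  rw [hx]
  unfold eps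
  rw [pow_succ]
  field_simp

theorem bandt_graf_aux (t : ℝ)
    (ht : t = 4 * ∑' k : ℕ, ((5 : ℝ)⁻¹) ^ (2 ^ k))
    (S : Fin 3 → ℝ → ℝ)
    (hS : S = ![fun x => x / 5, fun x => x / 5 + t / 5, fun x => x / 5 + 4 / 5]) :
    ¬ (id ∉ closure ({g : ℝ → ℝ | ∃ w₁ w₂ : List (Fin 3), w₁ ≠ [] ∧ w₂ ≠ [] ∧ w₁ ≠ w₂ ∧
      g = Function.invFun (wordMap S w₁) ∘ wordMap S w₂} \ {id})) ∧
    ∃ A B : ℕ → List (Fin 3),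
      (∀ k, A k ≠ [] ∧ B k ≠ [] ∧ A k ≠ B k ∧
        Function.invFun (wordMap S (A k)) ∘ wordMap S (B k) ≠ id) ∧
      Tendsto (fun k => ⨆ x : Set.Icc (0 : ℝ) 1,
          |Function.invFun (wordMap S (A k)) (wordMap S (B k) (x : ℝ)) - (x : ℝ)|)
        atTop (nhds 0) := by
  have hg : ∀ k, Function.invFun (wordMap S (Aw k)) ∘ wordMap S (Bw k)
      = fun x => x + eps k := fun k => funext fun x => key_formula ht hS k x
  have hgne : ∀ k, Function.invFun (wordMap S (Aw k)) ∘ wordMap S (Bw k) ≠ id := by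
    intro k h
    have := congrFun ((hg k).symm.trans h) 0
    simp at this
    exact (eps_pos k).ne' this
  have hAne : ∀ k, Aw k ≠ [] := by
    intro k; cases k <;> simp [Aw]
  have hBne : ∀ k, Bw k ≠ [] := fun k => by simp [Bw]
  have hABne : ∀ k, Aw k ≠ Bw k := by
    intro k h
    apply hgne k
    rw [h]
    exact Function.invFun_comp (wordMap_injective hS (Bw k))
  have hepslim : Tendsto eps atTop (nhds 0) := by
    have h1 : Tendsto (fun k : ℕ => 5 * ((5:ℝ)⁻¹) ^ (2^k)) atTop (nhds 0) := by
      have h2 : Tendsto (fun n : ℕ => ((5:ℝ)⁻¹) ^ n) atTop (nhds 0) :=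
        tendsto_pow_atTop_nhds_zero_of_lt_one (by norm_num) (by norm_num)
      have h3 : Tendsto (fun k : ℕ => 2^k) atTop atTop :=
        tendsto_pow_atTop_atTop_of_one_lt one_lt_two
      simpa using (h2.comp h3).const_mul 5
    exact squeeze_zero (fun k => (eps_pos k).le) eps_le h1
  constructor
  · rw [not_not]
    apply mem_closure_of_tendsto (f := fun k : ℕ => fun x : ℝ => x + eps k) (b := atTop)
    · rw [tendsto_pi_nhds]
      intro x
      simpa using tendsto_const_nhds.add hepslim
    · refine Filter.Eventually.of_forall fun k => ⟨⟨Aw k, Bw k, hAne k, hBne k, hABne k,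
        (hg k).symm⟩, ?_⟩
      simp only [Set.mem_singleton_iff]
      rw [← hg k]
      exact hgne k
  · refine ⟨Aw, Bw, fun k => ⟨hAne k, hBne k, hABne k, hgne k⟩, ?_⟩
    have hicc : Nonempty (Set.Icc (0:ℝ) 1) := (Set.nonempty_Icc.2 (by norm_num)).to_subtype
    have heq : ∀ k, (⨆ x : Set.Icc (0 : ℝ) 1,
        |Function.invFun (wordMap S (Aw k)) (wordMap S (Bw k) (x : ℝ)) - (x : ℝ)|) = eps k := by
      intro k
      have : (fun x : Set.Icc (0:ℝ) 1 =>
          |Function.invFun (wordMap S (Aw k)) (wordMap S (Bw k) (x : ℝ)) - (x : ℝ)|)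
          = fun _ => eps k := by
        funext x
        rw [key_formula ht hS k]
        simp [abs_of_pos (eps_pos k)]
      rw [this, ciSup_const]
    simpa [heq] using hepslim


/-- **A Bandt–Graf type example failing the WSP.**  Let `t = 4 ∑_{k≥0} 5^{-2^k}` and
consider the IFS on `[0,1]` given by `x/5`, `x/5 + t/5` and `x/5 + 4/5`.  This IFS does
not satisfy the weak separation property: there are nonempty words `α k ≠ β k` with
`S_{α k}⁻¹ ∘ S_{β k} ≠ I` for all `k` and `‖S_{α k}⁻¹ ∘ S_{β k} - I‖_∞ → 0`
(supremum over `[0,1]`). -/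
theorem bandt_graf_example_fails_wsp (t : ℝ)
    (ht : t = 4 * ∑' k : ℕ, ((5 : ℝ)⁻¹) ^ (2 ^ k))
    (S : Fin 3 → ℝ → ℝ)
    (hS : S = ![fun x => x / 5, fun x => x / 5 + t / 5, fun x => x / 5 + 4 / 5]) :
    ¬ SatisfiesWSP S ∧
    ∃ A B : ℕ → List (Fin 3),
      (∀ k, A k ≠ [] ∧ B k ≠ [] ∧ A k ≠ B k ∧
        Function.invFun (wordMap S (A k)) ∘ wordMap S (B k) ≠ id) ∧
      Tendsto (fun k => ⨆ x : Set.Icc (0 : ℝ) 1,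
          |Function.invFun (wordMap S (A k)) (wordMap S (B k) (x : ℝ)) - (x : ℝ)|)
        atTop (nhds 0) := by
  obtain ⟨h1, h2⟩ := bandt_graf_aux t ht S hS
  exact ⟨h1, h2⟩
end

section
/- Let α, β ∈ (0,1) with (log β)/(log α) irrational, and for k ∈ ℕ let E_k = {α^m β^n : m ∈ ℕ, n ∈ ℤ, n ≥ −k} ∩ [0,1]. Then E_k converges to [0,1] in the Hausdorff metric as k → ∞; equivalently, sup_{y ∈ [0,1]} inf_{x ∈ E_k} |y − x| → 0 as k → ∞. -/
open Set Metric Filter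

/-- Lipschitz bound for `exp` on nonpositive reals. -/
lemma abs_exp_sub_exp_le {a b : ℝ} (ha : a ≤ 0) (hb : b ≤ 0) :
    |Real.exp a - Real.exp b| ≤ |a - b| := by
  have key : ∀ a b : ℝ, b ≤ a → a ≤ 0 → Real.exp a - Real.exp b ≤ a - b := by
    intro a b hba ha0
    have h1 : Real.exp a ≤ 1 := Real.exp_le_one_iff.2 ha0
    have h2 : (b - a) + 1 ≤ Real.exp (b - a) := Real.add_one_le_exp (b - a)
    have h3 : Real.exp b = Real.exp a * Real.exp (b - a) := by
      rw [← Real.exp_add]; ring_nf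
    nlinarith [Real.exp_pos a, Real.exp_pos (b - a)]
  rcases le_total b a with h | h
  · rw [abs_of_nonneg (by linarith [Real.exp_le_exp.2 h]), abs_of_nonneg (by linarith)]
    exact key a b h ha
  · rw [abs_of_nonpos (by linarith [Real.exp_le_exp.2 h]), abs_of_nonpos (by linarith)]
    have := key b a h hb; linarith

/-- A nonzero integer combination equal to zero contradicts irrationality. -/
lemma irr_combo_ne {t : ℝ} (ht : Irrational t) {p q : ℤ} (hq : q ≠ 0) :
    (p : ℝ) - q * t ≠ 0 := by
  intro h
  have : t = (p : ℝ) / q := by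
    field_simp at h ⊢; linarith
  rw [this] at ht
  exact ht ⟨(p : ℚ) / q, by push_cast; ring⟩

/-- For irrational positive `t`, there are naturals `M, J` with `0 < M - J t < δ`. -/
lemma exists_small_pos {t : ℝ} (ht : Irrational t) (ht0 : 0 < t) {δ : ℝ} (hδ : 0 < δ) :
    ∃ M J : ℕ, 0 < (M : ℝ) - J * t ∧ (M : ℝ) - J * t < δ := by
  -- the subgroup generated by 1 and t is dense
  have hdense : Dense ((AddSubgroup.closure {1, t} : AddSubgroup ℝ) : Set ℝ) := by
    rcases AddSubgroup.dense_or_cyclic (AddSubgroup.closure {1, t}) with h | ⟨a, ha⟩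
    · exact h
    · exfalso
      have h1 : (1 : ℝ) ∈ AddSubgroup.closure ({1, t} : Set ℝ) :=
        AddSubgroup.subset_closure (by simp)
      have h2 : t ∈ AddSubgroup.closure ({1, t} : Set ℝ) :=
        AddSubgroup.subset_closure (by simp)
      rw [ha, AddSubgroup.mem_closure_singleton] at h1 h2
      obtain ⟨m, hm⟩ := h1
      obtain ⟨n, hn⟩ := h2
      have hm0 : m ≠ 0 := by rintro rfl; simp at hm
      have : t = (n : ℝ) / m := by
        have hma : (m : ℝ) * a = 1 := by simpa using hm
        have hna : (n : ℝ) * a = t := by simpa using hn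
        have hmr : (m : ℝ) ≠ 0 := Int.cast_ne_zero.2 hm0
        rw [eq_div_iff hmr]
        linear_combination n * hma - m * hna
      exact ht ⟨(n : ℚ) / m, by rw [this]; push_cast; ring⟩
  -- get a group element in (0, δ)
  obtain ⟨g, hgmem, hg⟩ := hdense.exists_between hδ
  rw [SetLike.mem_coe, AddSubgroup.mem_closure_pair] at hgmem
  obtain ⟨a, b, hab⟩ := hgmem
  have hab' : (a : ℝ) + b * t = g := by
    have := hab; push_cast at this ⊢
    simpa [zsmul_eq_mul] using this
  obtain ⟨hg0, hgδ⟩ := hg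
  rcases le_or_gt b 0 with hb | hb
  · -- coefficient of t already nonpositive
    have hbr : (b : ℝ) ≤ 0 := by exact_mod_cast hb
    have hbt : (b : ℝ) * t ≤ 0 := mul_nonpos_of_nonpos_of_nonneg hbr ht0.le
    have hapos : 0 < (a : ℝ) := by linarith
    have ha0 : 0 ≤ a := by exact_mod_cast hapos.le
    have e1 : ((a.toNat : ℕ) : ℝ) = (a : ℝ) := by exact_mod_cast Int.toNat_of_nonneg ha0
    have e2 : (((-b).toNat : ℕ) : ℝ) = -(b : ℝ) := by
      exact_mod_cast Int.toNat_of_nonneg (neg_nonneg.2 hb)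
    refine ⟨a.toNat, (-b).toNat, ?_, ?_⟩ <;>
    · rw [e1, e2]; linarith
  · -- positive coefficient: fix the sign using a multiple
    set c : ℤ := ⌈(b : ℝ) * t⌉ with hc
    set η : ℝ := (c : ℝ) - b * t with hη
    have hη0 : 0 < η := by
      have hne : (c : ℝ) - b * t ≠ 0 := by
        simpa [mul_comm] using irr_combo_ne ht (p := c) (q := b) (by omega)
      have hle : (b : ℝ) * t ≤ c := Int.le_ceil _
      rw [hη]; rcases lt_or_eq_of_le hle with h | h
      · linarith
      · exact absurd (by linarith) hne
    set i : ℕ := ⌊η / g⌋₊ with hi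
    have hig : (i : ℝ) * g ≤ η := by
      rw [hi]
      have := Nat.floor_le (le_of_lt (div_pos hη0 hg0))
      calc (⌊η / g⌋₊ : ℝ) * g ≤ (η / g) * g := by nlinarith
        _ = η := by field_simp
    have hig2 : η < (i + 1 : ℝ) * g := by
      rw [hi]
      have := Nat.lt_floor_add_one (η / g)
      calc η = (η / g) * g := by field_simp
        _ < (⌊η / g⌋₊ + 1 : ℝ) * g := by nlinarith
    set r : ℝ := η - i * g with hr
    have hrg : r < g := by rw [hr]; nlinarith
    have hrform : r = ((c - i * a : ℤ) : ℝ) - ((b * (1 + i) : ℤ) : ℝ) * t := by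
      rw [hr, hη, ← hab']; push_cast; ring
    have hbpos : (0:ℤ) < b * (1 + i) := mul_pos hb (by positivity)
    have hbne : (b * (1 + i) : ℤ) ≠ 0 := hbpos.ne'
    have hr0 : 0 < r := by
      rcases lt_or_eq_of_le (by nlinarith : (0:ℝ) ≤ r) with h | h
      · exact h
      · exact absurd (hrform ▸ h.symm) (irr_combo_ne ht hbne)
    have hM0 : 0 ≤ c - i * a := by
      by_contra h
      push_neg at h
      have h1 : (c - i * a : ℤ) ≤ -1 := by omega
      have h2 : ((c - i * a : ℤ) : ℝ) ≤ -1 := by exact_mod_cast h1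
      have htpos : 0 < ((b * (1 + i) : ℤ) : ℝ) * t := by
        apply mul_pos _ ht0
        exact_mod_cast hbpos
      rw [hrform] at hr0; linarith
    have e1 : (((c - i * a).toNat : ℕ) : ℝ) = ((c - i * a : ℤ) : ℝ) := by
      exact_mod_cast Int.toNat_of_nonneg hM0
    have e2 : (((b * (1 + i)).toNat : ℕ) : ℝ) = ((b * (1 + i) : ℤ) : ℝ) := by
      exact_mod_cast Int.toNat_of_nonneg hbpos.le
    refine ⟨(c - i * a).toNat, (b * (1 + i)).toNat, ?_, ?_⟩ <;>
    · rw [e1, e2, ← hrform]; linarith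
set_option maxHeartbeats 1000000 in
/-- **Density of `{α^m β^n}` in `[0,1]`.**  Let `α, β ∈ (0,1)` with `log β / log α`
irrational, and for `k ∈ ℕ` let `E k = {α^m β^n : m ∈ ℕ, n ∈ ℤ, n ≥ -k} ∩ [0,1]`.
Then `E k` converges to `[0,1]` in the Hausdorff metric as `k → ∞`; equivalently,
`sup_{y ∈ [0,1]} inf_{x ∈ E k} |y - x| → 0`. -/
theorem pretangent_sets_dense (α β : ℝ)
    (hα : α ∈ Set.Ioo (0 : ℝ) 1) (hβ : β ∈ Set.Ioo (0 : ℝ) 1)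
    (hirr : Irrational (Real.log β / Real.log α))
    (E : ℕ → Set ℝ)
    (hE : ∀ k, E k = {x : ℝ | ∃ (m : ℕ) (n : ℤ), -(k : ℤ) ≤ n ∧ x = α ^ m * β ^ n} ∩
      Set.Icc (0 : ℝ) 1) :
    Tendsto (fun k => ⨆ y : Set.Icc (0 : ℝ) 1, Metric.infDist (y : ℝ) (E k))
      atTop (nhds 0) := by
  obtain ⟨hα0, hα1⟩ := hα
  obtain ⟨hβ0, hβ1⟩ := hβ
  have hlogα : Real.log α < 0 := Real.log_neg hα0 hα1
  have hlogβ : Real.log β < 0 := Real.log_neg hβ0 hβ1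
  set t : ℝ := Real.log β / Real.log α with htdef
  have ht0 : 0 < t := div_pos_of_neg_of_neg hlogβ hlogα
  have hlogβt : Real.log β = t * Real.log α :=
    (div_mul_cancel₀ _ (ne_of_lt hlogα)).symm
  set L : ℝ := -Real.log α with hL
  have hL0 : 0 < L := by linarith
  -- `1 ∈ E k` for every `k`, so `E k` is nonempty
  have hone : ∀ k, (1 : ℝ) ∈ E k := by
    intro k
    rw [hE k]
    exact ⟨⟨0, 0, by simp, by simp⟩, by norm_num⟩
  rw [Metric.tendsto_atTop]
  intro ε hε
  -- choose M₀ with α ^ M₀ < ε / 2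
  obtain ⟨M₀, hM₀⟩ := exists_pow_lt_of_lt_one (half_pos hε) hα1
  -- choose θ = M - J t ∈ (0, δ) with δ = (ε/2) / L
  have hδ0 : 0 < ε / 2 / L := div_pos (half_pos hε) hL0
  obtain ⟨M, J, hθ0, hθδ⟩ := exists_small_pos hirr ht0 hδ0
  set θ : ℝ := (M : ℝ) - J * t with hθ
  set K : ℕ := ⌊(M₀ : ℝ) / θ⌋₊ * J with hK
  refine ⟨K, fun k hk => ?_⟩
  rw [Real.dist_0_eq_abs, abs_of_nonneg (Real.iSup_nonneg fun y => Metric.infDist_nonneg)]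
  have key : ∀ y : Set.Icc (0 : ℝ) 1, Metric.infDist (y : ℝ) (E k) ≤ ε / 2 := by
    rintro ⟨y, hy0, hy1⟩
    simp only
    rcases le_or_gt y (α ^ M₀) with hcase | hcase
    · -- y is close to 0: use the point α ^ M₀
      have hmem : α ^ M₀ ∈ E k := by
        rw [hE k]
        exact ⟨⟨M₀, 0, by simp, by simp⟩,
          ⟨le_of_lt (pow_pos hα0 _), pow_le_one₀ hα0.le hα1.le⟩⟩
      refine le_trans (Metric.infDist_le_dist_of_mem hmem) ?_
      rw [Real.dist_eq, abs_of_nonpos (by linarith)]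
      have := pow_pos hα0 M₀
      linarith
    · -- main case: y ∈ (α ^ M₀, 1]
      have hy0' : 0 < y := lt_trans (pow_pos hα0 M₀) hcase
      set s : ℝ := Real.log y / Real.log α with hs
      have hlogy0 : Real.log y ≤ 0 := Real.log_nonpos hy0'.le hy1
      have hlogyM : (M₀ : ℝ) * Real.log α ≤ Real.log y := by
        calc (M₀ : ℝ) * Real.log α = Real.log (α ^ M₀) := by rw [Real.log_pow]
          _ ≤ Real.log y := Real.log_le_log (pow_pos hα0 M₀) hcase.le
      have hs0 : 0 ≤ s := by
        rw [hs, div_nonneg_iff]; right; exact ⟨hlogy0, hlogα.le⟩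
      have hsM : s ≤ M₀ := by
        rw [hs, div_le_iff_of_neg hlogα]
        linarith
      set i : ℕ := ⌊s / θ⌋₊ with hi
      have hi1 : (i : ℝ) * θ ≤ s := by
        have h := Nat.floor_le (div_nonneg hs0 hθ0.le)
        calc (i : ℝ) * θ ≤ s / θ * θ := by nlinarith
          _ = s := by field_simp
      have hi2 : s < (i + 1 : ℝ) * θ := by
        have h := Nat.lt_floor_add_one (s / θ)
        calc s = s / θ * θ := by field_simp
          _ < (i + 1 : ℝ) * θ := by nlinarith
      -- the exponent bound
      have hiK : i * J ≤ k := by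
        refine le_trans (le_trans (Nat.mul_le_mul_right J ?_) (le_of_eq hK.symm)) hk
        exact Nat.floor_le_floor (by gcongr)
      -- the approximating point
      set x : ℝ := α ^ (i * M) * β ^ (-(i * J : ℤ)) with hx
      have hx0 : 0 < x := mul_pos (pow_pos hα0 _) (zpow_pos hβ0 _)
      have hlogx : Real.log x = Real.log α * ((i : ℝ) * θ) := by
        rw [hx, Real.log_mul (by positivity) (by positivity), Real.log_pow,
          Real.log_zpow, hlogβt, hθ]
        push_cast
        ring
      have hiθ0 : 0 ≤ (i : ℝ) * θ := by positivity
      have hlogx0 : Real.log x ≤ 0 := by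
        rw [hlogx]; exact mul_nonpos_of_nonpos_of_nonneg hlogα.le hiθ0
      have hx1 : x ≤ 1 := by
        rw [← Real.exp_log hx0, ← Real.exp_zero]
        exact Real.exp_le_exp.2 hlogx0
      have hxmem : x ∈ E k := by
        rw [hE k]
        refine ⟨⟨i * M, -(i * J : ℤ), by exact_mod_cast neg_le_neg (Int.ofNat_le.2 hiK), rfl⟩,
          hx0.le, hx1⟩
      refine le_trans (Metric.infDist_le_dist_of_mem hxmem) ?_
      rw [Real.dist_eq, ← Real.exp_log hy0', ← Real.exp_log hx0]
      refine le_trans (abs_exp_sub_exp_le hlogy0 hlogx0) ?_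
      have hlogys : Real.log y = Real.log α * s := by
        rw [hs, mul_comm, div_mul_cancel₀ _ (ne_of_lt hlogα)]
      rw [hlogx, hlogys, ← mul_sub, abs_mul, abs_of_neg hlogα,
        abs_of_nonneg (by linarith : (0:ℝ) ≤ s - i * θ)]
      have h1 : s - i * θ < θ := by linarith [hi2]
      have h2 : L * θ < L * (ε / 2 / L) := mul_lt_mul_of_pos_left hθδ hL0
      have h3 : L * (ε / 2 / L) = ε / 2 := by field_simp
      have h4 : -Real.log α * (s - i * θ) ≤ L * θ := by rw [hL]; nlinarith
      exact le_of_lt (lt_of_le_of_lt h4 (h3 ▸ h2))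
  calc (⨆ y : Set.Icc (0 : ℝ) 1, Metric.infDist (y : ℝ) (E k)) ≤ ε / 2 :=
        ciSup_le key
    _ < ε := by linarith
end
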